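/- Let J > 2 and let M be the dN × dN matrix given by the Kronecker product of the N×N circulant matrix (diagonal J, nearest cyclic neighbors −1) with the d×d identity. Then M is positive definite and det M = (2 T_N(J/2) − 2)^d. -/

import Mathlib

open Matrix
open scoped Kronecker

/-- Chebyshev polynomials of the first kind as real functions:
`T 0 = 1`, `T 1 x = x`, `T (n+1) x = 2x * T n x - T (n-1) x`. -/
def chebT : ℕ → ℝ → ℝ
  | 0, _ => 1
  | 1, x => x
  | n + 2, x => 2 * x * chebT (n + 1) x - chebT n x

/-- The `N × N` symmetric circulant matrix with diagonal entries `J` and entries `-1`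
at cyclically adjacent positions `(i, i ± 1 mod N)`. -/
def circMat (N : ℕ) [NeZero N] (J : ℝ) : Matrix (Fin N) (Fin N) ℝ :=
  fun i j => if i = j then J else if j = i + 1 ∨ i = j + 1 then -1 else 0


lemma chebT_half (z : ℝ) (hz : z ≠ 0) : ∀ n, chebT n ((z + z⁻¹) / 2) = (z ^ n + (z⁻¹) ^ n) / 2 := by
  intro n
  induction n using Nat.twoStepInduction with
  | zero => simp [chebT]
  | one => simp [chebT]
  | more n ih2 ih1 =>
    show 2 * ((z + z⁻¹)/2) * chebT (n+1) _ - chebT n _ = _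
    rw [ih1, ih2]
    have hz1 : z * z⁻¹ = 1 := mul_inv_cancel₀ hz
    linear_combination (1/2 : ℝ) * (z ^ n + z⁻¹ ^ n) * hz1

section FinFacts
variable {N : ℕ} [NeZero N] (hN : 3 ≤ N)

include hN

lemma fin_one_ne_zero : (1 : Fin N) ≠ 0 := by
  intro h
  have h1 : ((1 : Fin N) : ℕ) = 1 % N := Fin.val_one' N
  rw [h, Nat.mod_eq_of_lt (by omega)] at h1
  simp at h1

lemma fin_two_ne_zero : (1 : Fin N) + 1 ≠ 0 := by
  intro h
  have h1 : ((1 : Fin N) + 1 : Fin N).val = (1 % N + 1 % N) % N := by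
    rw [Fin.val_add, Fin.val_one']
  have e1 : (1:ℕ) % N = 1 := Nat.mod_eq_of_lt (by omega)
  have e2 : (2:ℕ) % N = 2 := Nat.mod_eq_of_lt (by omega)
  rw [h, e1] at h1
  norm_num [e2] at h1

lemma fin_ne_add_one (i : Fin N) : i ≠ i + 1 := by
  rw [ne_eq, left_eq_add]; exact fin_one_ne_zero hN

lemma fin_ne_sub_one (i : Fin N) : i ≠ i - 1 := by
  rw [ne_eq, eq_comm, sub_eq_self]; exact fin_one_ne_zero hN

lemma fin_add_one_ne_sub_one (i : Fin N) : i + 1 ≠ i - 1 := by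
  intro h
  rw [eq_sub_iff_add_eq, add_assoc, add_eq_left] at h
  exact fin_two_ne_zero hN h

end FinFacts

section MulVec
variable {N : ℕ} [NeZero N] (hN : 3 ≤ N) (J : ℝ)
include hN

lemma circMat_map_mulVec {K : Type*} [CommRing K] (f : ℝ →+* K) (v : Fin N → K) (i : Fin N) :
    (((circMat N J).map f) *ᵥ v) i = f J * v i - v (i + 1) - v (i - 1) := by
  have key : ∀ j, ((circMat N J).map f) i j * v j
      = (if j = i then f J * v i else 0)
        + ((if j = i + 1 then -v (i + 1) else 0) + (if j = i - 1 then -v (i - 1) else 0)) := by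
    intro j
    by_cases h1 : j = i
    · subst h1
      rw [if_pos rfl, if_neg (fin_ne_add_one hN j), if_neg (fin_ne_sub_one hN j)]
      simp [circMat, Matrix.map_apply]
    · by_cases h2 : j = i + 1
      · subst h2
        rw [if_neg h1, if_pos rfl, if_neg (fin_add_one_ne_sub_one hN i)]
        have : circMat N J i (i + 1) = -1 := by
          rw [circMat, if_neg (Ne.symm h1), if_pos (Or.inl rfl)]
        simp [Matrix.map_apply, this]
      · by_cases h3 : j = i - 1
        · subst h3
          rw [if_neg h1, if_neg h2, if_pos rfl]
          have : circMat N J i (i - 1) = -1 := by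
            rw [circMat, if_neg (Ne.symm h1), if_pos (Or.inr (by rw [sub_add_cancel]))]
          simp [Matrix.map_apply, this]
        · rw [if_neg h1, if_neg h2, if_neg h3]
          have : circMat N J i j = 0 := by
            rw [circMat, if_neg (Ne.symm h1), if_neg]
            rintro (h | h)
            · exact h2 h
            · exact h3 (by rw [h]; simp)
          simp [Matrix.map_apply, this]
  rw [mulVec, dotProduct]
  rw [Finset.sum_congr rfl (fun j _ => key j)]
  rw [Finset.sum_add_distrib, Finset.sum_add_distrib,
    Finset.sum_ite_eq' Finset.univ i (fun _ => f J * v i),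
    Finset.sum_ite_eq' Finset.univ (i+1) (fun _ => -v (i+1)),
    Finset.sum_ite_eq' Finset.univ (i-1) (fun _ => -v (i-1))]
  simp; ring

end MulVec

section Quad
variable {N : ℕ} [NeZero N] (hN : 3 ≤ N) (J : ℝ)
include hN

lemma circMat_quadForm (y : Fin N → ℝ) :
    y ⬝ᵥ (circMat N J *ᵥ y)
      = (J - 2) * (∑ i, y i * y i) + ∑ i, (y i - y (i + 1)) ^ 2 := by
  have hmv : ∀ i, (circMat N J *ᵥ y) i = J * y i - y (i + 1) - y (i - 1) := by
    intro i
    have h := circMat_map_mulVec hN J (RingHom.id ℝ) y i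
    simpa using h
  have e1 : ∑ i, y (i + 1) * y (i + 1) = ∑ i, y i * y i :=
    Fintype.sum_equiv (Equiv.addRight (1 : Fin N)) _ _ (fun i => rfl)
  have e2 : ∑ i, y i * y (i - 1) = ∑ i, y i * y (i + 1) := by
    refine (Fintype.sum_equiv (Equiv.addRight (1 : Fin N)) _ _ (fun i => ?_)).symm
    show y i * y (i + 1) = y (i + 1) * y (i + 1 - 1)
    rw [add_sub_cancel_right, mul_comm]
  have e3 : ∑ i, (y i - y (i + 1)) ^ 2
      = (∑ i, y i * y i) - 2 * (∑ i, y i * y (i + 1)) + ∑ i, y (i + 1) * y (i + 1) := by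
    rw [Finset.mul_sum, ← Finset.sum_sub_distrib, ← Finset.sum_add_distrib]
    exact Finset.sum_congr rfl fun i _ => by ring
  calc y ⬝ᵥ (circMat N J *ᵥ y)
      = ∑ i, (J * (y i * y i) - y i * y (i + 1) - y i * y (i - 1)) := by
        rw [dotProduct]; exact Finset.sum_congr rfl fun i _ => by rw [hmv i]; ring
    _ = J * (∑ i, y i * y i) - (∑ i, y i * y (i + 1)) - (∑ i, y i * y (i - 1)) := by
        rw [Finset.sum_sub_distrib, Finset.sum_sub_distrib, Finset.mul_sum]
    _ = _ := by rw [e2, e3, e1]; ring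

end Quad

open scoped Kronecker

section PD
variable {N : ℕ} [NeZero N] (hN : 3 ≤ N)

lemma circMat_symm (J : ℝ) : (circMat N J)ᵀ = circMat N J := by
  ext i j
  simp only [Matrix.transpose_apply, circMat]
  by_cases h : i = j
  · subst h; rfl
  · rw [if_neg h, if_neg (Ne.symm h)]
    simp [or_comm]

include hN

lemma quad_pos {J : ℝ} (hJ : 2 < J) (y : Fin N → ℝ) :
    0 ≤ y ⬝ᵥ (circMat N J *ᵥ y) ∧ (y ≠ 0 → 0 < y ⬝ᵥ (circMat N J *ᵥ y)) := by
  rw [circMat_quadForm hN J y]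
  have hS : 0 ≤ ∑ i, (y i - y (i + 1)) ^ 2 := Finset.sum_nonneg fun i _ => sq_nonneg _
  have hS0 : 0 ≤ ∑ i, y i * y i := Finset.sum_nonneg fun i _ => mul_self_nonneg _
  constructor
  · nlinarith
  · intro hy
    obtain ⟨i, hi⟩ := Function.ne_iff.mp hy
    have hi' : i ∈ Finset.univ ∧ 0 < y i * y i :=
      ⟨Finset.mem_univ i, mul_self_pos.mpr hi⟩
    have hpos : 0 < ∑ i, y i * y i :=
      Finset.sum_pos' (fun i _ => mul_self_nonneg _) ⟨i, hi'.1, hi'.2⟩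
    nlinarith

theorem kron_posDef {J : ℝ} (hJ : 2 < J) (d : ℕ) :
    (circMat N J ⊗ₖ (1 : Matrix (Fin d) (Fin d) ℝ)).PosDef := by
  rw [posDef_iff_dotProduct_mulVec]
  constructor
  · show _ᴴ = _
    rw [conjTranspose_eq_transpose_of_trivial, ← Matrix.kroneckerMap_transpose,
      circMat_symm, Matrix.transpose_one]
  · intro x hx
    have hcol : ∀ p : Fin N × Fin d,
        ((circMat N J ⊗ₖ (1 : Matrix (Fin d) (Fin d) ℝ)) *ᵥ x) p
          = (circMat N J *ᵥ fun i => x (i, p.2)) p.1 := by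
      rintro ⟨i, k⟩
      show ∑ q : Fin N × Fin d, _ = _
      rw [Fintype.sum_prod_type]
      show ∑ j : Fin N, ∑ l : Fin d,
          circMat N J i j * (1 : Matrix (Fin d) (Fin d) ℝ) k l * x (j, l) = _
      rw [mulVec, dotProduct]
      refine Finset.sum_congr rfl fun j _ => ?_
      rw [Finset.sum_eq_single k]
      · simp [Matrix.one_apply]
      · intro l _ hl
        simp [Matrix.one_apply, Ne.symm hl]
      · simp
    have hsum : (star x) ⬝ᵥ ((circMat N J ⊗ₖ (1 : Matrix (Fin d) (Fin d) ℝ)) *ᵥ x)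
        = ∑ k : Fin d, (fun i => x (i, k)) ⬝ᵥ (circMat N J *ᵥ fun i => x (i, k)) := by
      show ∑ p : Fin N × Fin d, _ = _
      rw [Fintype.sum_prod_type, Finset.sum_comm]
      refine Finset.sum_congr rfl fun k _ => Finset.sum_congr rfl fun i _ => ?_
      rw [hcol (i, k)]
      simp [dotProduct]
    rw [hsum]
    obtain ⟨⟨i0, k0⟩, hp⟩ := Function.ne_iff.mp hx
    refine Finset.sum_pos' (fun k _ => (quad_pos hN hJ _).1) ⟨k0, Finset.mem_univ k0, ?_⟩
    refine (quad_pos hN hJ _).2 (Function.ne_iff.mpr ⟨i0, ?_⟩)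
    simpa using hp

end PD

section Cx
open Complex Polynomial
variable {N : ℕ} [NeZero N]

private noncomputable def om (N : ℕ) : ℂ := Complex.exp (2 * Real.pi * Complex.I / N)

lemma hom : IsPrimitiveRoot (om N) N := Complex.isPrimitiveRoot_exp N (NeZero.ne N)

lemma om_pow_mod (a : ℕ) : om N ^ (a % N) = om N ^ a := by
  conv_rhs => rw [← Nat.mod_add_div a N]
  rw [pow_add, pow_mul, (hom (N := N)).pow_eq_one, one_pow, mul_one]

lemma om_pow_modEq {a b : ℕ} (h : a ≡ b [MOD N]) : om N ^ a = om N ^ b := by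
  rw [← om_pow_mod a, ← om_pow_mod b, h]

lemma om_prod_sub (z : ℂ) : ∏ k : Fin N, (z - om N ^ (k : ℕ)) = z ^ N - 1 := by
  have hNpos : 0 < N := Nat.pos_of_ne_zero (NeZero.ne N)
  have himg : nthRootsFinset N (1 : ℂ) = Finset.univ.image (fun k : Fin N => om N ^ (k : ℕ)) := by
    refine (Finset.eq_of_subset_of_card_le ?_ ?_).symm
    · intro x hx
      obtain ⟨k, _, rfl⟩ := Finset.mem_image.mp hx
      exact (Polynomial.mem_nthRootsFinset hNpos 1).mpr (by
        rw [← pow_mul, mul_comm, pow_mul, (hom (N := N)).pow_eq_one, one_pow])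
    · rw [(hom (N := N)).card_nthRootsFinset, Finset.card_image_of_injective _ ?_,
        Finset.card_univ, Fintype.card_fin]
      intro a b hab
      exact Fin.val_injective ((hom (N := N)).pow_inj a.isLt b.isLt hab)
  have hfac := Polynomial.X_pow_sub_one_eq_prod hNpos (hom (N := N))
  have := congrArg (Polynomial.eval z) hfac
  rw [Polynomial.eval_sub, Polynomial.eval_pow, Polynomial.eval_X, Polynomial.eval_one,
    Polynomial.eval_prod] at this
  rw [himg, Finset.prod_image ?_] at this
  · rw [this]
    exact (Finset.prod_congr rfl fun k _ => by simp).symm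
  · intro a _ b _ hab
    exact Fin.val_injective ((hom (N := N)).pow_inj a.isLt b.isLt hab)

lemma om_ne_zero : (om N : ℂ) ≠ 0 := (hom (N := N)).ne_zero (NeZero.ne N)

lemma om_inv_pow (k : Fin N) : (om N ^ (k : ℕ))⁻¹ = om N ^ ((-k : Fin N) : ℕ) := by
  refine (inv_eq_of_mul_eq_one_right ?_)
  rw [← pow_add]
  have h : (k : ℕ) + ((-k : Fin N) : ℕ) ≡ 0 [MOD N] := by
    have : ((k + -k : Fin N) : ℕ) = ((k : ℕ) + ((-k : Fin N) : ℕ)) % N := Fin.val_add k (-k)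
    rw [add_neg_cancel] at this
    simpa [Nat.ModEq] using this.symm
  rw [om_pow_modEq h, pow_zero]

lemma om_prod_sub_inv (z : ℂ) : ∏ k : Fin N, (z - (om N ^ (k : ℕ))⁻¹) = z ^ N - 1 := by
  rw [← om_prod_sub z]
  refine Fintype.prod_equiv (Equiv.neg (Fin N)) _ _ fun k => ?_
  show z - (om N ^ (k : ℕ))⁻¹ = z - om N ^ ((-k : Fin N) : ℕ)
  rw [om_inv_pow]

end Cx

section Diag
open Complex
variable {N : ℕ} [NeZero N] (hN : 3 ≤ N)

lemma fin_val_add_one_modEq (i : Fin N) : ((i + 1 : Fin N) : ℕ) ≡ (i : ℕ) + 1 [MOD N] := by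
  have h1 : ((i + 1 : Fin N) : ℕ) = ((i : ℕ) + ((1 : Fin N) : ℕ)) % N := Fin.val_add i 1
  calc ((i + 1 : Fin N) : ℕ) ≡ (i : ℕ) + ((1 : Fin N) : ℕ) [MOD N] := by
        rw [h1]; exact Nat.mod_modEq _ _
    _ ≡ (i : ℕ) + 1 [MOD N] :=
        Nat.ModEq.add_left _ (by rw [Fin.val_one']; exact Nat.mod_modEq 1 N)

include hN

lemma circ_det_complex (J : ℝ) :
    ((circMat N J).det : ℂ)
      = ∏ k : Fin N, ((J : ℂ) - om N ^ (k : ℕ) - (om N ^ (k : ℕ))⁻¹) := by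
  classical
  set f : ℝ →+* ℂ := Complex.ofRealHom with hf
  set V : Matrix (Fin N) (Fin N) ℂ := Matrix.vandermonde (fun k : Fin N => om N ^ (k : ℕ)) with hV
  set lam : Fin N → ℂ := fun k => (J : ℂ) - om N ^ (k : ℕ) - (om N ^ (k : ℕ))⁻¹ with hlam
  have hωk : ∀ k : Fin N, om N ^ (k : ℕ) ≠ 0 := fun k => pow_ne_zero _ om_ne_zero
  have hmul : (circMat N J).map f * V = V * Matrix.diagonal lam := by
    ext i k
    have hlhs : ((circMat N J).map f * V) i k
        = ((circMat N J).map f *ᵥ fun j => V j k) i := rfl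
    rw [hlhs, circMat_map_mulVec hN J f (fun j => V j k) i]
    have hVapp : ∀ j : Fin N, V j k = om N ^ ((j : ℕ) * (k : ℕ)) := fun j => by
      rw [hV, Matrix.vandermonde]; simp [← pow_mul]
    have hv1 : V (i + 1) k = V i k * om N ^ (k : ℕ) := by
      rw [hVapp, hVapp, ← pow_add,
        om_pow_modEq (Nat.ModEq.mul_right (k : ℕ) (fin_val_add_one_modEq i)), add_mul, one_mul]
    have hv2 : V (i - 1) k = V i k * (om N ^ (k : ℕ))⁻¹ := by
      rw [eq_mul_inv_iff_mul_eq₀ (hωk k), hVapp, hVapp, ← pow_add]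
      have h2 : ((i - 1 : Fin N) : ℕ) + 1 ≡ (i : ℕ) [MOD N] := by
        have := fin_val_add_one_modEq (i - 1)
        rw [sub_add_cancel] at this
        exact this.symm
      exact om_pow_modEq (by
        calc ((i - 1 : Fin N) : ℕ) * (k : ℕ) + (k : ℕ)
            = (((i - 1 : Fin N) : ℕ) + 1) * (k : ℕ) := by ring
          _ ≡ (i : ℕ) * (k : ℕ) [MOD N] := Nat.ModEq.mul_right _ h2)
    rw [hv1, hv2, Matrix.mul_diagonal, hlam]
    show (f J) * V i k - V i k * om N ^ (k : ℕ) - V i k * (om N ^ (k : ℕ))⁻¹ = _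
    simp only [hf, Complex.ofRealHom_eq_coe]
    ring
  have hdetV : V.det ≠ 0 := by
    rw [hV, Matrix.det_vandermonde_ne_zero_iff]
    intro a b hab
    exact Fin.val_injective ((hom (N := N)).pow_inj a.isLt b.isLt hab)
  have hdet := congrArg Matrix.det hmul
  rw [Matrix.det_mul, Matrix.det_mul, Matrix.det_diagonal] at hdet
  have hC : ((circMat N J).map f).det = ((circMat N J).det : ℂ) := by
    rw [← RingHom.mapMatrix_apply, ← RingHom.map_det]; rfl
  rw [hC] at hdet
  exact mul_right_cancel₀ hdetV (by rw [hdet]; ring)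

end Diag

section Det
variable {N : ℕ} [NeZero N] (hN : 3 ≤ N)
include hN

lemma circ_det {J : ℝ} (hJ : 2 < J) :
    (circMat N J).det = 2 * chebT N (J / 2) - 2 := by
  have hωk : ∀ k : Fin N, om N ^ (k : ℕ) ≠ 0 := fun k => pow_ne_zero _ om_ne_zero
  set s : ℝ := Real.sqrt (J ^ 2 - 4) with hsdef
  have hs : s ^ 2 = J ^ 2 - 4 := Real.sq_sqrt (by nlinarith)
  have hs0 : 0 ≤ s := Real.sqrt_nonneg _
  set z : ℝ := (J + s) / 2 with hzdef
  have hz : 0 < z := by rw [hzdef]; linarith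
  have hzne : z ≠ 0 := ne_of_gt hz
  have hzJ : z + z⁻¹ = J := by
    field_simp
    nlinarith [hs]
  have hu : (z : ℂ) ≠ 0 := Complex.ofReal_ne_zero.mpr hzne
  have h1 : (z : ℂ) * (z : ℂ) + 1 = (J : ℂ) * (z : ℂ) := by
    have huJ : (z : ℂ) + (z : ℂ)⁻¹ = (J : ℂ) := by
      rw [← Complex.ofReal_inv, ← Complex.ofReal_add, hzJ]
    field_simp at huJ ⊢
    linear_combination huJ
  have key : ∀ k : Fin N,
      (z : ℂ) * ((J : ℂ) - om N ^ (k : ℕ) - (om N ^ (k : ℕ))⁻¹)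
        = ((z : ℂ) - om N ^ (k : ℕ)) * ((z : ℂ) - (om N ^ (k : ℕ))⁻¹) := by
    intro k
    have ha := mul_inv_cancel₀ (hωk k)
    linear_combination -h1 - ha
  have hprod : ∏ k : Fin N, ((J : ℂ) - om N ^ (k : ℕ) - (om N ^ (k : ℕ))⁻¹)
      = (z : ℂ) ^ N + ((z : ℂ)⁻¹) ^ N - 2 := by
    have hzN : (z : ℂ) ^ N ≠ 0 := pow_ne_zero _ hu
    refine mul_left_cancel₀ hzN ?_
    have hone : (z : ℂ) ^ N * ((z : ℂ)⁻¹) ^ N = 1 := by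
      rw [← mul_pow, mul_inv_cancel₀ hu, one_pow]
    calc (z : ℂ) ^ N * ∏ k : Fin N, ((J : ℂ) - om N ^ (k : ℕ) - (om N ^ (k : ℕ))⁻¹)
        = ∏ k : Fin N, (z : ℂ) * ((J : ℂ) - om N ^ (k : ℕ) - (om N ^ (k : ℕ))⁻¹) := by
          rw [Finset.prod_mul_distrib, Finset.prod_const, Finset.card_univ, Fintype.card_fin]
      _ = ∏ k : Fin N, ((z : ℂ) - om N ^ (k : ℕ)) * ((z : ℂ) - (om N ^ (k : ℕ))⁻¹) :=
          Finset.prod_congr rfl fun k _ => key k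
      _ = ((z : ℂ) ^ N - 1) * ((z : ℂ) ^ N - 1) := by
          rw [Finset.prod_mul_distrib, om_prod_sub, om_prod_sub_inv]
      _ = (z : ℂ) ^ N * ((z : ℂ) ^ N + ((z : ℂ)⁻¹) ^ N - 2) := by
          linear_combination -hone
  have hdetR : (circMat N J).det = z ^ N + (z⁻¹) ^ N - 2 := by
    have hc := circ_det_complex hN J
    rw [hprod] at hc
    exact_mod_cast hc
  rw [hdetR]
  have hcheb := chebT_half z hzne N
  rw [show J / 2 = (z + z⁻¹) / 2 by rw [hzJ], hcheb]
  ring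

end Det

theorem kronecker_circulant_posDef_det
    (N d : ℕ) [NeZero N] (hN : 3 ≤ N) (hd : 1 ≤ d) (J : ℝ) (hJ : 2 < J) :
    (circMat N J ⊗ₖ (1 : Matrix (Fin d) (Fin d) ℝ)).PosDef ∧
    (circMat N J ⊗ₖ (1 : Matrix (Fin d) (Fin d) ℝ)).det
      = (2 * chebT N (J / 2) - 2) ^ d := by
  refine ⟨kron_posDef hN hJ d, ?_⟩
  rw [Matrix.det_kronecker, Matrix.det_one, one_pow, mul_one, circ_det hN hJ,
    Fintype.card_fin]
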